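/- arXiv:1004.0838 — 3 statements merged into one kernel-verified Lean document; each statement's English description precedes it below -/
import Mathlib

section
/- Let M : {0,1}* → ℝ≥0 be a martingale (i.e., M(σ) = (M(σ0) + M(σ1))/2 for all σ) taking values in the natural numbers. Then for every string σ there exists an extension τ of σ such that M(τ') = M(τ) for every extension τ' of τ. -/
open Filter

/-- The initial segment of length `n` of an infinite binary sequence. -/
def seg (X : ℕ → Bool) (n : ℕ) : List Bool := List.ofFn (fun i : Fin n => X i)

/-- The martingale fairness condition. -/
def fairM (M : List Bool → ℝ) : Prop :=
  ∀ σ : List Bool, M σ = (M (σ ++ [false]) + M (σ ++ [true])) / 2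

/-- An integer-valued martingale can always be permanently defeated: below any
string `σ` there is an extension `τ` on whose extensions `M` is constant. -/
theorem stmt0 (M : List Bool → ℝ)
    (hfair : fairM M) (hnonneg : ∀ σ, 0 ≤ M σ)
    (hint : ∀ σ, ∃ k : ℕ, M σ = k) :
    ∀ σ : List Bool, ∃ τ : List Bool, σ <+: τ ∧
      ∀ τ' : List Bool, τ <+: τ' → M τ' = M τ := by
  intro σ
  -- the set of natural values attained on extensions of σ
  have hne : ∃ k : ℕ, ∃ τ : List Bool, σ <+: τ ∧ M τ = k := by
    obtain ⟨k, hk⟩ := hint σ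
    exact ⟨k, σ, List.prefix_refl σ, hk⟩
  classical
  set k := Nat.find hne with hkdef
  obtain ⟨τ, hpre, hτ⟩ := Nat.find_spec hne
  -- minimality: every extension of σ has value ≥ k
  have hmin : ∀ ρ : List Bool, σ <+: ρ → (k : ℝ) ≤ M ρ := by
    intro ρ hρ
    obtain ⟨m, hm⟩ := hint ρ
    have : k ≤ m := Nat.find_min' hne ⟨ρ, hρ, hm⟩
    rw [hm]
    exact_mod_cast this
  -- key step: if M τ₀ = k then both children have value k
  have hstep : ∀ τ₀ : List Bool, σ <+: τ₀ → M τ₀ = k → ∀ b : Bool,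
      M (τ₀ ++ [b]) = k := by
    intro τ₀ hσ h0 b
    have h1 : (k : ℝ) ≤ M (τ₀ ++ [false]) :=
      hmin _ (hσ.trans ⟨[false], rfl⟩)
    have h2 : (k : ℝ) ≤ M (τ₀ ++ [true]) :=
      hmin _ (hσ.trans ⟨[true], rfl⟩)
    have hf := hfair τ₀
    rw [h0] at hf
    have hsum : M (τ₀ ++ [false]) + M (τ₀ ++ [true]) = 2 * k := by
      linarith
    cases b
    · linarith
    · linarith
  -- induction along the extension
  have hall : ∀ ρ : List Bool, ∀ τ₀ : List Bool, σ <+: τ₀ → M τ₀ = k →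
      M (τ₀ ++ ρ) = k := by
    intro ρ
    induction ρ with
    | nil => intro τ₀ _ h; simpa using h
    | cons b ρ ih =>
        intro τ₀ hσ h0
        have hb : M (τ₀ ++ [b]) = k := hstep τ₀ hσ h0 b
        have := ih (τ₀ ++ [b]) (hσ.trans ⟨[b], rfl⟩) hb
        simpa using this
  refine ⟨τ, hpre, ?_⟩
  intro τ' hτ'
  obtain ⟨ρ, rfl⟩ := hτ'
  rw [hall ρ τ hpre hτ, hτ]
end

section
/- For any integer-valued martingale M, the set of infinite binary sequences on which M does not succeed (i.e., on which sup_n M(X↾n) < ∞) contains a dense open subset of Cantor space, hence is comeager. -/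
open Filter

/-- `M` mSucceeds on `X`: `limsup_n M(X↾n) = ∞`, equivalently the capital is
unbounded along `X`. -/
def mSucceeds (M : List Bool → ℝ) (X : ℕ → Bool) : Prop :=
  ∀ C : ℝ, ∃ n : ℕ, C < M (seg X n)

/-- cylinder above a string -/
def cyl (σ : List Bool) : Set (ℕ → Bool) := {X | seg X σ.length = σ}

lemma seg_length (X : ℕ → Bool) (n : ℕ) : (seg X n).length = n := by
  simp [seg]

lemma seg_getElem (X : ℕ → Bool) (n i : ℕ) (h : i < (seg X n).length) :
    (seg X n)[i] = X i := by
  simp [seg]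

lemma mem_cyl_iff (σ : List Bool) (X : ℕ → Bool) :
    X ∈ cyl σ ↔ ∀ i, (h : i < σ.length) → X i = σ[i] := by
  constructor
  · intro hX i h
    have h2 : i < (seg X σ.length).length := by rw [seg_length]; exact h
    have := List.getElem_of_eq (hX.symm) h
    rw [this, seg_getElem]
  · intro h
    show seg X σ.length = σ
    apply List.ext_getElem (by simp [seg])
    intro i h1 h2
    rw [seg_getElem]
    exact h i h2
  
lemma cyl_open (σ : List Bool) : IsOpen (cyl σ) := by
  have : cyl σ = ⋂ i ∈ Finset.range σ.length,
      (fun X : ℕ → Bool => X i) ⁻¹' {(σ[i]?).getD false} := by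
    ext X
    simp only [Set.mem_iInter, Set.mem_preimage, Set.mem_singleton_iff, Finset.mem_range,
      mem_cyl_iff]
    constructor
    · intro h i hi
      rw [h i hi]
      simp [List.getElem?_eq_getElem hi]
    · intro h i hi
      have := h i hi
      rw [List.getElem?_eq_getElem hi] at this
      simpa using this
  rw [this]
  exact isOpen_biInter_finset fun i _ => (continuous_apply i).isOpen_preimage _ (isOpen_discrete _)

lemma seg_add (X : ℕ → Bool) (a b : ℕ) :
    seg X (a + b) = seg X a ++ List.ofFn (fun i : Fin b => X (a + i)) := by
  simp only [seg]
  rw [List.ofFn_add]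
  simp

/-- For any integer-valued martingale `M`, the set of sequences on which `M`
does not succeed contains a dense open set, hence is comeager. -/
theorem stmt2 (M : List Bool → ℝ)
    (hfair : fairM M) (hnonneg : ∀ σ, 0 ≤ M σ)
    (hint : ∀ σ, ∃ k : ℕ, M σ = k) :
    (∃ U : Set (ℕ → Bool), IsOpen U ∧ Dense U ∧
        U ⊆ {X : ℕ → Bool | ¬ mSucceeds M X}) ∧
      {X : ℕ → Bool | ¬ mSucceeds M X} ∈ residual (ℕ → Bool) := by
  -- For each σ, pick an extension τ minimizing M among all extensions of σ.
  have hmin : ∀ σ : List Bool, ∃ τ : List Bool, σ <+: τ ∧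
      ∀ ρ : List Bool, M τ ≤ M (τ ++ ρ) ∧ M τ ≤ M (σ ++ ρ) := by
    intro σ
    set S : Set ℕ := {k | ∃ ρ : List Bool, M (σ ++ ρ) = k} with hS
    have hSne : S.Nonempty := by
      obtain ⟨k, hk⟩ := hint (σ ++ [])
      exact ⟨k, ⟨[], hk⟩⟩
    obtain ⟨ρ₀, hρ₀⟩ := Nat.sInf_mem hSne
    refine ⟨σ ++ ρ₀, ⟨ρ₀, rfl⟩, ?_⟩
    have hle : ∀ ρ : List Bool, M (σ ++ ρ₀) ≤ M (σ ++ ρ) := by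
      intro ρ
      obtain ⟨k, hk⟩ := hint (σ ++ ρ)
      have hkS : k ∈ S := ⟨ρ, hk⟩
      rw [hρ₀, hk]
      exact_mod_cast Nat.sInf_le hkS
    intro ρ
    refine ⟨?_, hle ρ⟩
    rw [List.append_assoc]
    exact hle _
  -- On the cone above such τ, M is constant.
  have hconst : ∀ τ : List Bool, (∀ ρ : List Bool, M τ ≤ M (τ ++ ρ)) →
      ∀ ρ : List Bool, M (τ ++ ρ) = M τ := by
    intro τ hτ ρ
    induction ρ using List.reverseRecOn with
    | nil => simp
    | append_singleton ρ b ih =>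
      have hf := hfair (τ ++ ρ)
      rw [ih] at hf
      have h0 : M τ ≤ M ((τ ++ ρ) ++ [false]) := by
        rw [List.append_assoc]; exact hτ _
      have h1 : M τ ≤ M ((τ ++ ρ) ++ [true]) := by
        rw [List.append_assoc]; exact hτ _
      rw [← List.append_assoc]
      cases b
      · linarith
      · linarith
  -- The choice of τ for each σ
  choose τf hpre hτ using hmin
  -- The dense open set
  set U : Set (ℕ → Bool) := ⋃ σ : List Bool, cyl (τf σ) with hU
  have hopen : IsOpen U := isOpen_iUnion fun σ => cyl_open (τf σ)
  -- On every X in cyl (τf σ), M is bounded.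
  have hbd : ∀ σ, ∀ X ∈ cyl (τf σ), ¬ mSucceeds M X := by
    intro σ X hX hs
    set N := (τf σ).length with hN
    set C := ∑ i ∈ Finset.range (N + 1), M (seg X i) with hC
    obtain ⟨n, hn⟩ := hs C
    have hterm : ∀ m, m ≤ N → M (seg X m) ≤ C := by
      intro m hm
      rw [hC]
      exact Finset.single_le_sum (f := fun i => M (seg X i))
        (fun i _ => hnonneg _) (Finset.mem_range.mpr (Nat.lt_succ_of_le hm))
    have hXN : seg X N = τf σ := hX
    have hbig : ∀ m, N ≤ m → M (seg X m) ≤ C := by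
      intro m hm
      obtain ⟨b, rfl⟩ := Nat.exists_eq_add_of_le hm
      rw [seg_add, hXN, hconst (τf σ) (fun ρ => (hτ σ ρ).1) _, ← hXN]
      exact hterm N le_rfl
    rcases le_or_gt n N with h | h
    · exact absurd hn (not_lt.mpr (hterm n h))
    · exact absurd hn (not_lt.mpr (hbig n h.le))
  have hsub : U ⊆ {X : ℕ → Bool | ¬ mSucceeds M X} := by
    intro X hXU
    obtain ⟨_, ⟨σ, rfl⟩, hX⟩ := hXU
    exact hbd σ X hX
  -- Density
  have hdense : Dense U := by
    rw [dense_iff_inter_open]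
    intro V hV ⟨X, hXV⟩
    obtain ⟨I, u, hu, hsubV⟩ := isOpen_pi_iff.mp hV X hXV
    set n := if h : I.Nonempty then I.max' h + 1 else 0 with hn
    have hIn : ∀ i ∈ I, i < n := by
      intro i hi
      rw [hn, dif_pos ⟨i, hi⟩]
      exact Nat.lt_succ_of_le (I.le_max' i hi)
    obtain ⟨ρ, hρ⟩ := hpre (seg X n)
    set τ := τf (seg X n) with hτdef
    set Y : ℕ → Bool := fun i => if h : i < τ.length then τ[i] else false with hY
    have hYcyl : Y ∈ cyl τ := by
      rw [mem_cyl_iff]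
      intro i h
      simp [hY, dif_pos h]
    have hlen : n ≤ τ.length := by
      rw [← hρ]
      simp [seg_length]
    have hYX : ∀ i, i < n → Y i = X i := by
      intro i hi
      have hiτ : i < τ.length := lt_of_lt_of_le hi hlen
      have hiσ : i < (seg X n).length := by rw [seg_length]; exact hi
      have e1 : τ[i] = (seg X n ++ ρ)[i]'(by rw [hρ]; exact hiτ) :=
        List.getElem_of_eq hρ.symm hiτ
      rw [hY]
      simp only [dif_pos hiτ]
      rw [e1, List.getElem_append_left hiσ, seg_getElem]
    refine ⟨Y, ?_, Set.mem_iUnion.mpr ⟨seg X n, hYcyl⟩⟩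
    apply hsubV
    intro i hi
    rw [hYX i (hIn i hi)]
    exact (hu i hi).2
  exact ⟨⟨U, hopen, hdense, hsub⟩,
    mem_of_superset (residual_of_dense_open hopen hdense) hsub⟩
end

section
/- There exists X ∈ {0,1}^ω such that no integer-valued martingale from any fixed countable family succeeds on X, yet X fails the law of large numbers. (In particular, for the countable family of all recursive integer-valued martingales, there is an integer-valued random X not satisfying the law of large numbers.) -/
open Filter

/-- `X` satisfies the law of large numbers. -/
def lawOfLargeNumbers (X : ℕ → Bool) : Prop :=
  Tendsto (fun n : ℕ =>
      (((Finset.range n).filter (fun i => X i = true)).card : ℝ) / n)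
    atTop (nhds (1 / 2))

/-- Key lemma: an integer-valued martingale is constant on the cone above a
node minimizing its value in a given cone. -/
lemma cone_const (M : List Bool → ℝ) (hf : fairM M)
    (hi : ∀ σ, ∃ k : ℕ, M σ = k) (σ : List Bool) :
    ∃ η : List Bool, ∀ ξ : List Bool, M ((σ ++ η) ++ ξ) = M (σ ++ η) := by
  classical
  have hP : ∃ k : ℕ, ∃ η : List Bool, M (σ ++ η) = (k : ℝ) := by
    obtain ⟨k, hk⟩ := hi σ
    exact ⟨k, [], by simpa using hk⟩
  set m := Nat.find hP with hm
  obtain ⟨η, hη⟩ := Nat.find_spec hP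
  -- every value in the cone above σ is ≥ m
  have hmin : ∀ ξ : List Bool, (m : ℝ) ≤ M (σ ++ ξ) := by
    intro ξ
    obtain ⟨k, hk⟩ := hi (σ ++ ξ)
    have : m ≤ k := Nat.find_min' hP ⟨ξ, hk⟩
    rw [hk]; exact_mod_cast this
  -- one step: children of an m-node in the cone are m-nodes
  have step : ∀ τ : List Bool, σ <+: τ → M τ = (m : ℝ) →
      ∀ b : Bool, M (τ ++ [b]) = (m : ℝ) := by
    intro τ hpre hτ b
    obtain ⟨t, ht⟩ := hpre
    have h0 : (m : ℝ) ≤ M (τ ++ [false]) := by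
      have := hmin (t ++ [false]); rwa [← List.append_assoc, ht] at this
    have h1 : (m : ℝ) ≤ M (τ ++ [true]) := by
      have := hmin (t ++ [true]); rwa [← List.append_assoc, ht] at this
    have hfτ := hf τ
    rw [hτ] at hfτ
    cases b
    · linarith
    · linarith
  -- induction along the cone
  have main : ∀ ξ τ, σ <+: τ → M τ = (m : ℝ) → M (τ ++ ξ) = (m : ℝ) := by
    intro ξ
    induction ξ with
    | nil => intro τ _ hτ; simpa using hτ
    | cons b ξ ih =>
      intro τ hpre hτ
      have h1 : M (τ ++ [b]) = (m : ℝ) := step τ hpre hτ b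
      have h2 : σ <+: τ ++ [b] := hpre.trans (List.prefix_append τ [b])
      have := ih (τ ++ [b]) h2 h1
      simpa [List.append_assoc] using this
  refine ⟨η, fun ξ => ?_⟩
  rw [main ξ (σ ++ η) (List.prefix_append σ η) hη, hη]

/-- The stage-by-stage construction of the approximating strings. -/
noncomputable def sigmaSeq (F : ℕ → (List Bool → ℝ))
    (key : ∀ i σ, ∃ η, ∀ ξ, F i ((σ ++ η) ++ ξ) = F i (σ ++ η)) : ℕ → List Bool
  | 0 => []
  | (i + 1) =>
      let s := sigmaSeq F key i
      let base := s ++ List.replicate (3 * s.length + 1) false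
      base ++ Classical.choose (key i base)

/-- For any countable family of integer-valued martingales (e.g. the recursive
ones) there is a sequence `X` defeating all of them which fails the law of
large numbers. -/
theorem stmt5 (F : ℕ → (List Bool → ℝ))
    (hfair : ∀ i, fairM (F i)) (hnonneg : ∀ i σ, 0 ≤ F i σ)
    (hint : ∀ i σ, ∃ k : ℕ, F i σ = k) :
    ∃ X : ℕ → Bool, (∀ i, ¬ mSucceeds (F i) X) ∧ ¬ lawOfLargeNumbers X := by
  classical
  have key : ∀ i σ, ∃ η, ∀ ξ, F i ((σ ++ η) ++ ξ) = F i (σ ++ η) :=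
    fun i σ => cone_const (F i) (hfair i) (hint i) σ
  set sigma : ℕ → List Bool := sigmaSeq F key with hsigma
  have hstep : ∀ i, sigma (i + 1) =
      (sigma i ++ List.replicate (3 * (sigma i).length + 1) false) ++
        Classical.choose (key i (sigma i ++ List.replicate (3 * (sigma i).length + 1) false)) :=
    fun i => rfl
  have hpre1 : ∀ i, sigma i <+: sigma (i + 1) := by
    intro i
    rw [hstep i]
    exact ⟨_, by rw [List.append_assoc]⟩
  have hmono : ∀ a b, a ≤ b → sigma a <+: sigma b := by
    intro a b hab
    induction b with
    | zero => simp [Nat.le_zero.mp hab]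
    | succ b ih =>
      rcases Nat.lt_or_ge a (b + 1) with h | h
      · exact (ih (Nat.lt_succ_iff.mp h)).trans (hpre1 b)
      · have : a = b + 1 := le_antisymm hab h
        simp [this]
  have hlen1 : ∀ i, (sigma i).length + 1 ≤ (sigma (i + 1)).length := by
    intro i
    rw [hstep i]
    simp only [List.length_append, List.length_replicate]
    omega
  have hlen : ∀ i, i ≤ (sigma i).length := by
    intro i
    induction i with
    | zero => simp
    | succ i ih => have := hlen1 i; omega
  set X : ℕ → Bool := fun n => (sigma (n + 1)).getD n false with hXdef
  -- consistency of the bits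
  have hagree : ∀ a b n, a ≤ b → n < (sigma a).length →
      (sigma a).getD n false = (sigma b).getD n false := by
    intro a b n hab hn
    have hpre := hmono a b hab
    have hn' : n < (sigma b).length := lt_of_lt_of_le hn hpre.length_le
    rw [List.getD_eq_getElem _ _ hn, List.getD_eq_getElem _ _ hn']
    exact hpre.getElem hn
  have hX : ∀ n m, n < (sigma m).length → X n = (sigma m).getD n false := by
    intro n m hn
    have hn1 : n < (sigma (n + 1)).length := lt_of_lt_of_le (Nat.lt_succ_self n) (hlen (n + 1))
    rcases le_total (n + 1) m with h | h
    · exact hagree (n + 1) m n h hn1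
    · exact (hagree m (n + 1) n h hn).symm
  -- initial segments of X are takes of the sigma's
  have hseg : ∀ n m, n ≤ (sigma m).length → seg X n = (sigma m).take n := by
    intro n m h
    apply List.ext_getElem
    · simp [seg, h]
    · intro i h1 h2
      have hi_n : i < n := by simpa [seg] using h1
      have hi_m : i < (sigma m).length := lt_of_lt_of_le hi_n h
      rw [List.getElem_take]
      simp only [seg, List.getElem_ofFn]
      rw [hX i m hi_m, List.getD_eq_getElem _ _ hi_m]
  refine ⟨X, ?_, ?_⟩
  · -- no F i succeeds on X
    intro i hsucc
    set L := (sigma (i + 1)).length with hL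
    set c := F i (sigma (i + 1)) with hc
    -- F i is constant c above sigma (i+1)
    have hcone : ∀ ξ, F i (sigma (i + 1) ++ ξ) = c := by
      intro ξ
      have := Classical.choose_spec
        (key i (sigma i ++ List.replicate (3 * (sigma i).length + 1) false)) ξ
      rw [hc, hstep i]
      exact this
    have htail : ∀ n, L ≤ n → F i (seg X n) = c := by
      intro n hn
      have hn' : n ≤ (sigma (n + 1)).length := le_trans (Nat.le_succ n) (hlen (n + 1))
      rw [hseg n (n + 1) hn']
      obtain ⟨t, ht⟩ := hmono (i + 1) (n + 1) (by have h := hlen (i + 1); have : (sigma (i + 1)).length ≤ n := hn; omega)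
      rw [← ht, List.take_append,
        List.take_of_length_le (by rw [← hL]; exact hn)]
      exact hcone _
    set C : ℝ := c + ∑ n ∈ Finset.range L, F i (seg X n) with hC
    obtain ⟨n, hnC⟩ := hsucc C
    have hbound : F i (seg X n) ≤ C := by
      rcases le_or_gt L n with h | h
      · rw [htail n h, hC]
        exact le_add_of_nonneg_right (Finset.sum_nonneg fun _ _ => hnonneg i _)
      · have h1 : F i (seg X n) ≤ ∑ k ∈ Finset.range L, F i (seg X k) :=
          Finset.single_le_sum (fun k _ => hnonneg i _) (Finset.mem_range.mpr h)
        have h2 : (0 : ℝ) ≤ c := by rw [hc]; exact hnonneg i _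
        rw [hC]; linarith
    exact absurd hnC (not_lt.mpr hbound)
  · -- X fails the law of large numbers
    intro hlln
    have hev : ∀ᶠ n : ℕ in atTop,
        (1 / 3 : ℝ) < (((Finset.range n).filter (fun i => X i = true)).card : ℝ) / n :=
      hlln.eventually (eventually_gt_nhds (by norm_num))
    obtain ⟨N, hN⟩ := eventually_atTop.mp hev
    set s := N with hs
    set ℓ := (sigma s).length with hℓ
    set n := 4 * ℓ + 1 with hn
    have hℓN : N ≤ ℓ := hlen N
    have hnN : N ≤ n := by omega
    -- positions ℓ ≤ i < n carry the bit false
    have hfalse : ∀ i, ℓ ≤ i → i < n → X i = false := by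
      intro i hi1 hi2
      have hbase : (sigma s ++ List.replicate (3 * ℓ + 1) false).length = n := by
        simp [List.length_append, List.length_replicate]; omega
      have hilen : i < (sigma (s + 1)).length := by
        rw [hstep s]
        simp only [List.length_append]
        rw [← hℓ] at *
        have : n ≤ (sigma s ++ List.replicate (3 * ℓ + 1) false).length := hbase.ge
        simp only [List.length_append, List.length_replicate] at this ⊢
        omega
      have hgetD : ∀ (l₁ l₂ : List Bool) (k : ℕ), l₁ <+: l₂ → k < l₁.length →
          l₂.getD k false = l₁.getD k false := by
        intro l₁ l₂ k h hk
        rw [List.getD_eq_getElem _ _ hk,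
          List.getD_eq_getElem _ _ (lt_of_lt_of_le hk h.length_le)]
        exact (h.getElem hk).symm
      have hpb : (sigma s ++ List.replicate (3 * ℓ + 1) false) <+: sigma (s + 1) :=
        ⟨_, (hstep s).symm⟩
      have hib : i < (sigma s ++ List.replicate (3 * ℓ + 1) false).length := by
        rw [hbase]; exact hi2
      rw [hX i (s + 1) hilen, hgetD _ _ i hpb hib, List.getD_eq_getElem _ _ hib,
        List.getElem_append_right (by rw [← hℓ]; exact hi1)]
      exact List.getElem_replicate _
    -- hence the count of trues below n is at most ℓ
    have hsub : (Finset.range n).filter (fun i => X i = true) ⊆ Finset.range ℓ := by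
      intro i hi
      simp only [Finset.mem_filter, Finset.mem_range] at hi
      rcases Nat.lt_or_ge i ℓ with h | h
      · exact Finset.mem_range.mpr h
      · exact absurd hi.2 (by simp [hfalse i h hi.1])
    have hcard : ((Finset.range n).filter (fun i => X i = true)).card ≤ ℓ := by
      have := Finset.card_le_card hsub
      simpa using this
    have hratio := hN n hnN
    have hnpos : (0 : ℝ) < (n : ℝ) := by positivity
    have hlt : (((Finset.range n).filter (fun i => X i = true)).card : ℝ) / n ≤ (1 / 3 : ℝ) := by
      rw [div_le_iff₀ hnpos]
      have h1 : (((Finset.range n).filter (fun i => X i = true)).card : ℝ) ≤ (ℓ : ℝ) := by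
        exact_mod_cast hcard
      have h2 : (n : ℝ) = 4 * (ℓ : ℝ) + 1 := by rw [hn]; push_cast; ring
      rw [h2]; linarith
    linarith
end
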